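/- In a birth-death chain with arrival rate Λ in every state and departure rate μ_i from state i where μ_i ≤ ν_i for all i ≥ 1 (ν_i being the departure rates of a second chain with the same arrival rates), if both chains are positive recurrent then the stationary mean number of jobs in the first chain is at least the stationary mean in the second chain: E[N]^μ ≥ E[N]^ν. -/

import Mathlib

open scoped ENNReal

/-- Comparing two positive recurrent birth-death chains with the same birth rate `Λ` and
death rates `μ i ≤ ν i`: the stationary mean number in system of the `μ`-chain is at least
that of the `ν`-chain.  The stationary weights are `∏_{j=1}^i Λ/r_j`. -/
theorem stmt12 (Λ : ℝ≥0∞) (hΛ0 : 0 < Λ) (hΛt : Λ ≠ ⊤)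
    (μ ν : ℕ → ℝ≥0∞)
    (hμpos : ∀ i, 1 ≤ i → 0 < μ i)
    (hle : ∀ i, 1 ≤ i → μ i ≤ ν i)
    (hrecμ : (∑' i, ∏ j ∈ Finset.range i, Λ / μ (j + 1)) < ⊤)
    (hrecν : (∑' i, ∏ j ∈ Finset.range i, Λ / ν (j + 1)) < ⊤) :
    (∑' i : ℕ, (i : ℝ≥0∞) * ∏ j ∈ Finset.range i, Λ / ν (j + 1)) /
        (∑' i, ∏ j ∈ Finset.range i, Λ / ν (j + 1))
      ≤ (∑' i : ℕ, (i : ℝ≥0∞) * ∏ j ∈ Finset.range i, Λ / μ (j + 1)) /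
          (∑' i, ∏ j ∈ Finset.range i, Λ / μ (j + 1)) := by
  set a : ℕ → ℝ≥0∞ := fun i => ∏ j ∈ Finset.range i, Λ / μ (j + 1) with ha
  set b : ℕ → ℝ≥0∞ := fun i => ∏ j ∈ Finset.range i, Λ / ν (j + 1) with hb
  -- cross inequality
  have hcross : ∀ i j : ℕ, i ≤ j → a i * b j ≤ a j * b i := by
    intro i j hij
    obtain ⟨d, rfl⟩ := Nat.exists_eq_add_of_le hij
    have haid : a (i + d) = a i * ∏ k ∈ Finset.range d, Λ / μ (i + k + 1) := by
      simp [ha, Finset.prod_range_add]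
    have hbid : b (i + d) = b i * ∏ k ∈ Finset.range d, Λ / ν (i + k + 1) := by
      simp [hb, Finset.prod_range_add]
    have hP : (∏ k ∈ Finset.range d, Λ / ν (i + k + 1))
        ≤ ∏ k ∈ Finset.range d, Λ / μ (i + k + 1) := by
      refine Finset.prod_le_prod' fun k _ => ?_
      exact ENNReal.div_le_div le_rfl (hle _ (Nat.le_add_left 1 _))
    calc a i * b (i + d) = a i * (∏ k ∈ Finset.range d, Λ / ν (i + k + 1)) * b i := by
          rw [hbid]; ring
      _ ≤ a i * (∏ k ∈ Finset.range d, Λ / μ (i + k + 1)) * b i := by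
          gcongr
      _ = a (i + d) * b i := by rw [haid]
    -- done
  set F : ℕ × ℕ → ℝ≥0∞ := fun p => (p.1 : ℝ≥0∞) * b p.1 * a p.2 with hF
  set G : ℕ × ℕ → ℝ≥0∞ := fun p => (p.1 : ℝ≥0∞) * a p.1 * b p.2 with hG
  have helper : ∀ i j : ℕ, i ≤ j → F (i, j) + F (j, i) ≤ G (i, j) + G (j, i) := by
    intro i j hij
    obtain ⟨d, rfl⟩ := Nat.exists_eq_add_of_le hij
    have hYX : a i * b (i + d) ≤ a (i + d) * b i := hcross i (i + d) (Nat.le_add_right i d)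
    simp only [hF, hG]
    push_cast
    calc (i : ℝ≥0∞) * b i * a (i + d) + ((i : ℝ≥0∞) + d) * b (i + d) * a i
        = ((i : ℝ≥0∞) * (a (i + d) * b i) + (i : ℝ≥0∞) * (a i * b (i + d)))
            + (d : ℝ≥0∞) * (a i * b (i + d)) := by ring
      _ ≤ ((i : ℝ≥0∞) * (a (i + d) * b i) + (i : ℝ≥0∞) * (a i * b (i + d)))
            + (d : ℝ≥0∞) * (a (i + d) * b i) := by gcongr
      _ = (i : ℝ≥0∞) * a i * b (i + d) + ((i : ℝ≥0∞) + d) * a (i + d) * b i := by ring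
  have hkey : ∀ p : ℕ × ℕ, F p + F p.swap ≤ G p + G p.swap := by
    rintro ⟨i, j⟩
    rcases le_total i j with h | h
    · exact helper i j h
    · simpa [add_comm] using helper j i h
  -- sum inequality
  have hswapF : ∑' p : ℕ × ℕ, F p.swap = ∑' p : ℕ × ℕ, F p :=
    (Equiv.prodComm ℕ ℕ).tsum_eq F
  have hswapG : ∑' p : ℕ × ℕ, G p.swap = ∑' p : ℕ × ℕ, G p :=
    (Equiv.prodComm ℕ ℕ).tsum_eq G
  have hFG : ∑' p : ℕ × ℕ, F p ≤ ∑' p : ℕ × ℕ, G p := by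
    have h2 : (2 : ℝ≥0∞) * ∑' p : ℕ × ℕ, F p ≤ 2 * ∑' p : ℕ × ℕ, G p := by
      calc (2 : ℝ≥0∞) * ∑' p : ℕ × ℕ, F p
          = ∑' p : ℕ × ℕ, F p + ∑' p : ℕ × ℕ, F p.swap := by rw [hswapF, two_mul]
        _ = ∑' p : ℕ × ℕ, (F p + F p.swap) := (ENNReal.tsum_add).symm
        _ ≤ ∑' p : ℕ × ℕ, (G p + G p.swap) := ENNReal.tsum_le_tsum hkey
        _ = ∑' p : ℕ × ℕ, G p + ∑' p : ℕ × ℕ, G p.swap := ENNReal.tsum_add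
        _ = 2 * ∑' p : ℕ × ℕ, G p := by rw [hswapG, two_mul]
    exact (ENNReal.mul_le_mul_iff_right two_ne_zero ENNReal.ofNat_ne_top).mp h2
  have hprodF : (∑' i : ℕ, (i : ℝ≥0∞) * b i) * (∑' j, a j) = ∑' p : ℕ × ℕ, F p := by
    rw [ENNReal.tsum_prod']
    rw [← ENNReal.tsum_mul_right]
    exact tsum_congr fun i => (ENNReal.tsum_mul_left).symm
  have hprodG : (∑' i : ℕ, (i : ℝ≥0∞) * a i) * (∑' j, b j) = ∑' p : ℕ × ℕ, G p := by
    rw [ENNReal.tsum_prod']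
    rw [← ENNReal.tsum_mul_right]
    exact tsum_congr fun i => (ENNReal.tsum_mul_left).symm
  have hmain : (∑' i : ℕ, (i : ℝ≥0∞) * b i) * (∑' j, a j)
      ≤ (∑' i : ℕ, (i : ℝ≥0∞) * a i) * (∑' j, b j) := by
    rw [hprodF, hprodG]; exact hFG
  -- denominators are positive and finite
  have hDμ0 : (∑' i, a i) ≠ 0 := by
    intro h
    have h1 : a 0 ≤ ∑' i, a i := ENNReal.le_tsum 0
    rw [h] at h1; simp [ha] at h1
  have hDν0 : (∑' i, b i) ≠ 0 := by
    intro h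
    have h1 : b 0 ≤ ∑' i, b i := ENNReal.le_tsum 0
    rw [h] at h1; simp [hb] at h1
  have hDμt : (∑' i, a i) ≠ ⊤ := hrecμ.ne
  have hDνt : (∑' i, b i) ≠ ⊤ := hrecν.ne
  have hcancel : (∑' i, b i) * (∑' i, b i)⁻¹ = 1 := ENNReal.mul_inv_cancel hDν0 hDνt
  have hstep : (∑' i : ℕ, (i : ℝ≥0∞) * b i) ≤ ((∑' i : ℕ, (i : ℝ≥0∞) * a i) * ∑' i, b i) / ∑' i, a i := by
    rw [ENNReal.le_div_iff_mul_le (Or.inl hDμ0) (Or.inl hDμt)]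
    exact hmain
  have goal' : (∑' i : ℕ, (i : ℝ≥0∞) * b i) / (∑' i, b i)
      ≤ (∑' i : ℕ, (i : ℝ≥0∞) * a i) / (∑' i, a i) := by
    calc (∑' i : ℕ, (i : ℝ≥0∞) * b i) / (∑' i, b i)
        ≤ (((∑' i : ℕ, (i : ℝ≥0∞) * a i) * ∑' i, b i) / ∑' i, a i) / (∑' i, b i) :=
          ENNReal.div_le_div hstep le_rfl
      _ = (∑' i : ℕ, (i : ℝ≥0∞) * a i) * (∑' i, a i)⁻¹ * ((∑' i, b i) * (∑' i, b i)⁻¹) := by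
          simp only [div_eq_mul_inv]; ring
      _ = (∑' i : ℕ, (i : ℝ≥0∞) * a i) / (∑' i, a i) := by
          rw [hcancel, mul_one, div_eq_mul_inv]
  exact goal'
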